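/- For every natural number m ≥ 1 and every real number p with 0 < p < 1/2, it holds that 1 - p < ∑_{j=0}^{m} (Nat.choose (2*m+1) j : ℝ) * p^j * (1-p)^(2*m+1-j). -/

import Mathlib

/-- The classical repetition code of length `2m+1` has error threshold `1/2`: for
`0 < p < 1/2`, the success probability under majority voting exceeds `1 - p`, i.e.
`1 - p < ∑_{j=0}^{m} C(2m+1, j) p^j (1-p)^(2m+1-j)`. -/
theorem repetition_code_threshold (m : ℕ) (hm : 1 ≤ m) (p : ℝ)
    (hp0 : 0 < p) (hp : p < 1 / 2) :
    1 - p < ∑ j ∈ Finset.range (m + 1),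
      (Nat.choose (2 * m + 1) j : ℝ) * p ^ j * (1 - p) ^ (2 * m + 1 - j) := by
  set q : ℝ := 1 - p with hqdef
  have hq0 : 0 < q := by rw [hqdef]; linarith
  have hpq : p < q := by rw [hqdef]; linarith
  have hone : p + q = 1 := by rw [hqdef]; ring
  -- binomial expansion of 1
  have h1 : (1:ℝ) = ∑ j ∈ Finset.range (2*m+1+1),
      p ^ j * q ^ (2*m+1-j) * (Nat.choose (2*m+1) j : ℝ) := by
    have h := add_pow p q (2*m+1)
    rw [hone, one_pow] at h
    exact h
  -- split the expansion at m+1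
  have hsplit : (1:ℝ) =
      (∑ j ∈ Finset.range (m+1), p ^ j * q ^ (2*m+1-j) * (Nat.choose (2*m+1) j : ℝ))
      + ∑ k ∈ Finset.range (m+1),
          p ^ (m+1+k) * q ^ (m-k) * (Nat.choose (2*m+1) (m+1+k) : ℝ) := by
    rw [h1, show 2*m+1+1 = (m+1) + (m+1) by ring, Finset.sum_range_add]
    congr 1
    refine Finset.sum_congr rfl fun k hk => ?_
    have hk' : k < m + 1 := Finset.mem_range.mp hk
    have e1 : 2*m+1 - (m+1+k) = m - k := by omega
    rw [e1]
  set T : ℝ := ∑ k ∈ Finset.range (m+1),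
      p ^ (m+1+k) * q ^ (m-k) * (Nat.choose (2*m+1) (m+1+k) : ℝ) with hT
  -- rewrite the goal sum to match the expansion's term shape
  have hgoal : (∑ j ∈ Finset.range (m + 1),
      (Nat.choose (2 * m + 1) j : ℝ) * p ^ j * q ^ (2 * m + 1 - j))
      = ∑ j ∈ Finset.range (m+1), p ^ j * q ^ (2*m+1-j) * (Nat.choose (2*m+1) j : ℝ) :=
    Finset.sum_congr rfl fun j _ => by ring
  rw [hgoal]
  -- suffices to show T < p
  suffices hTp : T < p by linarith [hsplit]
  -- expansion of p
  have h2 : p = ∑ i ∈ Finset.range (2*m+1),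
      p ^ (i+1) * q ^ (2*m-i) * (Nat.choose (2*m) i : ℝ) := by
    have h := add_pow p q (2*m)
    rw [hone, one_pow] at h
    calc p = p * ∑ i ∈ Finset.range (2*m+1),
        p ^ i * q ^ (2*m-i) * (Nat.choose (2*m) i : ℝ) := by rw [← h, mul_one]
    _ = ∑ i ∈ Finset.range (2*m+1), p ^ (i+1) * q ^ (2*m-i) * (Nat.choose (2*m) i : ℝ) := by
        rw [Finset.mul_sum]
        exact Finset.sum_congr rfl fun i _ => by ring
  -- split p's expansion: p = A + B
  have h3 : p = (∑ i ∈ Finset.range m, p ^ (i+1) * q ^ (2*m-i) * (Nat.choose (2*m) i : ℝ))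
      + ∑ k ∈ Finset.range (m+1),
          p ^ (m+1+k) * q ^ (m-k) * (Nat.choose (2*m) (m+k) : ℝ) := by
    have hshift : (∑ k ∈ Finset.range (m+1),
        p ^ (m+k+1) * q ^ (2*m-(m+k)) * (Nat.choose (2*m) (m+k) : ℝ))
        = ∑ k ∈ Finset.range (m+1),
            p ^ (m+1+k) * q ^ (m-k) * (Nat.choose (2*m) (m+k) : ℝ) := by
      refine Finset.sum_congr rfl fun k hk => ?_
      have hk' : k < m + 1 := Finset.mem_range.mp hk
      have e1 : m + k + 1 = m + 1 + k := by omega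
      have e2 : 2*m - (m+k) = m - k := by omega
      rw [e1, e2]
    conv_lhs => rw [h2]
    rw [show 2*m+1 = m + (m+1) by ring, Finset.sum_range_add, hshift]
  -- Pascal: T = B + D
  have hpascal : T = (∑ k ∈ Finset.range (m+1),
          p ^ (m+1+k) * q ^ (m-k) * (Nat.choose (2*m) (m+k) : ℝ))
      + ∑ k ∈ Finset.range (m+1),
          p ^ (m+1+k) * q ^ (m-k) * (Nat.choose (2*m) (m+1+k) : ℝ) := by
    rw [hT, ← Finset.sum_add_distrib]
    refine Finset.sum_congr rfl fun k hk => ?_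
    have hc : (2*m+1).choose (m+1+k) = (2*m).choose (m+k) + (2*m).choose (m+1+k) := by
      have h := Nat.choose_succ_succ (2*m) (m+k)
      simpa [show m+1+k = (m+k)+1 by ring] using h
    rw [hc]
    push_cast
    ring
  -- D: drop last (zero) term, then reflect
  have hD : (∑ k ∈ Finset.range (m+1),
          p ^ (m+1+k) * q ^ (m-k) * (Nat.choose (2*m) (m+1+k) : ℝ))
      = ∑ i ∈ Finset.range m, p ^ (2*m-i) * q ^ (i+1) * (Nat.choose (2*m) i : ℝ) := by
    rw [Finset.sum_range_succ, Nat.choose_eq_zero_of_lt (by omega)]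
    rw [← Finset.sum_range_reflect fun i => p ^ (2*m-i) * q ^ (i+1) * (Nat.choose (2*m) i : ℝ)]
    simp only [Nat.cast_zero, mul_zero, add_zero]
    refine Finset.sum_congr rfl fun k hk => ?_
    have hk' : k < m := Finset.mem_range.mp hk
    have e1 : 2*m - (m - 1 - k) = m+1+k := by omega
    have e2 : m - 1 - k + 1 = m - k := by omega
    have e3 : (2*m).choose (m-1-k) = (2*m).choose (m+1+k) := by
      rw [← Nat.choose_symm (show m+1+k ≤ 2*m by omega)]
      congr 1
      omega
    rw [e1, e2, e3]
  rw [hD] at hpascal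
  -- positivity of A - D
  have hpos : (0:ℝ) < ∑ i ∈ Finset.range m,
      (p ^ (i+1) * q ^ (2*m-i) - p ^ (2*m-i) * q ^ (i+1)) * (Nat.choose (2*m) i : ℝ) := by
    apply Finset.sum_pos
    · intro i hi
      have hi' : i < m := Finset.mem_range.mp hi
      apply mul_pos
      · have hexp : 2*m - i = (i+1) + (2*m - 2*i - 1) := by omega
        have hlt : p ^ (2*m - 2*i - 1) < q ^ (2*m - 2*i - 1) :=
          pow_lt_pow_left₀ hpq hp0.le (by omega)
        have hpq1 : 0 < p ^ (i+1) * q ^ (i+1) := by positivity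
        calc (0:ℝ) < p ^ (i+1) * q ^ (i+1) * (q ^ (2*m-2*i-1) - p ^ (2*m-2*i-1)) := by
              apply mul_pos hpq1; linarith
        _ = p ^ (i+1) * q ^ (2*m-i) - p ^ (2*m-i) * q ^ (i+1) := by
              rw [hexp, pow_add, pow_add]; ring
      · exact_mod_cast Nat.choose_pos (show i ≤ 2*m by omega)
    · exact ⟨0, Finset.mem_range.mpr (by omega)⟩
  have key : (∑ i ∈ Finset.range m,
      (p ^ (i+1) * q ^ (2*m-i) - p ^ (2*m-i) * q ^ (i+1)) * (Nat.choose (2*m) i : ℝ))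
      = (∑ i ∈ Finset.range m, p ^ (i+1) * q ^ (2*m-i) * (Nat.choose (2*m) i : ℝ))
        - ∑ i ∈ Finset.range m, p ^ (2*m-i) * q ^ (i+1) * (Nat.choose (2*m) i : ℝ) := by
    rw [← Finset.sum_sub_distrib]
    exact Finset.sum_congr rfl fun i _ => by ring
  linarith [h3, hpascal, hpos, key]
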